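/- Let T be a weak mixing measure-preserving invertible transformation of a probability space and let (s_{n,i})_{(r_n)} be a dynamical sequence of integers that for each n takes each integer value at most once and has positive lower density (liminf_n r_n/s̃_n > 0, where s̃_n = max_i s_{n,i} − min_i s_{n,i}). Then (s_{n,i})_{(r_n)} is weak mixing with respect to T: for every sequence of measurable sets (A_n) and every measurable set B, (1/r_n)∑_{i<r_n} |μ(T^{s_{n,i}}(A_n) ∩ B) − μ(A_n)μ(B)| → 0. -/

import Mathlib

open MeasureTheory Filter Finset

/-- Integer iterate of an invertible transformation. -/
noncomputable def iterZ {X : Type*} [MeasurableSpace X] (T : X ≃ᵐ X) (k : ℤ) : X → X :=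
  if 0 ≤ k then (⇑T)^[k.toNat] else (⇑T.symm)^[(-k).toNat]

lemma iterZ_eq {X : Type*} [MeasurableSpace X] (T : X ≃ᵐ X) (k : ℤ) :
    iterZ T k = ⇑((T.toEquiv : Equiv.Perm X) ^ k) := by
  unfold iterZ
  split_ifs with h
  · obtain ⟨n, rfl⟩ := Int.eq_ofNat_of_zero_le h
    rw [zpow_natCast, Equiv.Perm.coe_pow]
    rfl
  · have hk : k = -(((-k).toNat : ℕ) : ℤ) := by omega
    rw [hk, zpow_neg, zpow_natCast, ← inv_pow, Equiv.Perm.coe_pow]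
    simp only [Int.neg_neg, Int.toNat_natCast]
    rfl

lemma iterZ_image_add {X : Type*} [MeasurableSpace X] (T : X ≃ᵐ X) (a b : ℤ) (A : Set X) :
    iterZ T (a + b) '' A = iterZ T a '' (iterZ T b '' A) := by
  simp only [iterZ_eq, zpow_add, Equiv.Perm.coe_mul, Set.image_comp]

lemma measurable_iterZ {X : Type*} [MeasurableSpace X] (T : X ≃ᵐ X) (k : ℤ) :
    Measurable (iterZ T k) := by
  unfold iterZ
  split_ifs
  · exact T.measurable.iterate _
  · exact T.symm.measurable.iterate _

lemma iterZ_image_eq_preimage {X : Type*} [MeasurableSpace X] (T : X ≃ᵐ X) (k : ℤ) (A : Set X) :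
    iterZ T k '' A = iterZ T (-k) ⁻¹' A := by
  simp only [iterZ_eq]
  rw [Equiv.image_eq_preimage_symm, zpow_neg]
  rfl

lemma measurableSet_iterZ_image {X : Type*} [MeasurableSpace X] (T : X ≃ᵐ X) (k : ℤ)
    {A : Set X} (hA : MeasurableSet A) : MeasurableSet (iterZ T k '' A) := by
  rw [iterZ_image_eq_preimage]
  exact measurable_iterZ T (-k) hA

lemma measurePreserving_iterZ {X : Type*} [MeasurableSpace X] {μ : Measure X} (T : X ≃ᵐ X)
    (hT : MeasurePreserving T μ μ) (k : ℤ) : MeasurePreserving (iterZ T k) μ μ := by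
  unfold iterZ
  split_ifs
  · exact hT.iterate _
  · exact (hT.symm T).iterate _

lemma measure_iterZ_image {X : Type*} [MeasurableSpace X] {μ : Measure X} (T : X ≃ᵐ X)
    (hT : MeasurePreserving T μ μ) (k : ℤ) {A : Set X} (hA : MeasurableSet A) :
    μ (iterZ T k '' A) = μ A := by
  rw [iterZ_image_eq_preimage]
  exact (measurePreserving_iterZ T hT (-k)).measure_preimage hA.nullMeasurableSet

lemma avg_tendsto_zero {X : Type*} [MeasurableSpace X] (μ : Measure X) (T : X ≃ᵐ X)
    (hwm : ∀ A : ℕ → Set X, (∀ n, MeasurableSet (A n)) → ∀ B : Set X, MeasurableSet B →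
      Tendsto (fun n : ℕ =>
          (1 / (n : ℝ)) * ∑ i ∈ Finset.range n,
            |(μ (iterZ T (i : ℤ) '' A n ∩ B)).toReal - (μ (A n)).toReal * (μ B).toReal|)
        atTop (nhds 0))
    (A : ℕ → Set X) (hA : ∀ n, MeasurableSet (A n)) (B : Set X) (hB : MeasurableSet B)
    (L : ℕ → ℕ) (hL : Tendsto L atTop atTop) :
    Tendsto (fun n : ℕ =>
        (1 / (L n : ℝ)) * ∑ i ∈ Finset.range (L n),
          |(μ (iterZ T (i : ℤ) '' A n ∩ B)).toReal - (μ (A n)).toReal * (μ B).toReal|)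
      atTop (nhds 0) := by
  classical
  set g : ℕ → ℝ := fun n =>
    (1 / (L n : ℝ)) * ∑ i ∈ Finset.range (L n),
      |(μ (iterZ T (i : ℤ) '' A n ∩ B)).toReal - (μ (A n)).toReal * (μ B).toReal| with hg
  have hg0 : ∀ n, 0 ≤ g n := fun n =>
    mul_nonneg (by positivity) (Finset.sum_nonneg fun i _ => abs_nonneg _)
  show Tendsto g atTop (nhds 0)
  rw [Metric.tendsto_atTop]
  by_contra hcon
  push_neg at hcon
  obtain ⟨ε, hε, hfreq⟩ := hcon
  have hfr : ∃ᶠ n in atTop, ε ≤ g n := by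
    rw [frequently_atTop]
    intro N
    obtain ⟨n, hn, h⟩ := hfreq N
    refine ⟨n, hn, ?_⟩
    rwa [Real.dist_eq, sub_zero, abs_of_nonneg (hg0 n)] at h
  obtain ⟨φ, hφ, hφε⟩ := extraction_of_frequently_atTop hfr
  obtain ⟨ψ, hψ, hmono⟩ := strictMono_subseq_of_tendsto_atTop (hL.comp hφ.tendsto_atTop)
  set u : ℕ → ℕ := φ ∘ ψ with hu
  set v : ℕ → ℕ := fun j => L (u j) with hv
  have hvmono : StrictMono v := hmono
  set C : ℕ → Set X := fun k => if h : ∃ j, v j = k then A (u h.choose) else ∅ with hC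
  have hCmeas : ∀ k, MeasurableSet (C k) := by
    intro k
    simp only [hC]
    split
    · exact hA _
    · exact MeasurableSet.empty
  have hCv : ∀ j, C (v j) = A (u j) := by
    intro j
    have h : ∃ j', v j' = v j := ⟨j, rfl⟩
    simp only [hC, dif_pos h]
    exact congrArg A (congrArg u (hvmono.injective h.choose_spec))
  have hlim := (hwm C hCmeas B hB).comp hvmono.tendsto_atTop
  have hge : ∀ j, ε ≤ ((fun n : ℕ =>
      (1 / (n : ℝ)) * ∑ i ∈ Finset.range n,
        |(μ (iterZ T (i : ℤ) '' C n ∩ B)).toReal - (μ (C n)).toReal * (μ B).toReal|) ∘ v) j := by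
    intro j
    have heq : ((fun n : ℕ =>
        (1 / (n : ℝ)) * ∑ i ∈ Finset.range n,
          |(μ (iterZ T (i : ℤ) '' C n ∩ B)).toReal - (μ (C n)).toReal * (μ B).toReal|) ∘ v) j
        = g (u j) := by
      simp only [Function.comp, hCv j, hg, hv]
      rw [show C (L (u j)) = A (u j) from hCv j]
    rw [heq]
    exact hφε (ψ j)
  have : ε ≤ 0 := le_of_tendsto_of_tendsto' tendsto_const_nhds hlim hge
  linarith

/-- Let `T` be weak mixing and let `(s_{n,i})` be a dynamical sequence of integers taking
each value at most once for each `n`, with positive lower density `liminf r_n/s̃_n > 0`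
(where `M n` and `m n` are the maximum and minimum of `s n · ` on `[0, r n)`).  Then the
dynamical sequence is weak mixing with respect to `T`. -/
theorem pos_density_injective_dynseq_weak_mixing
    {X : Type*} [MeasurableSpace X] (μ : Measure X) [IsProbabilityMeasure μ]
    (T : X ≃ᵐ X) (hT : MeasurePreserving T μ μ)
    (hwm : ∀ A : ℕ → Set X, (∀ n, MeasurableSet (A n)) → ∀ B : Set X, MeasurableSet B →
      Tendsto (fun n : ℕ =>
          (1 / (n : ℝ)) * ∑ i ∈ Finset.range n,
            |(μ (iterZ T (i : ℤ) '' A n ∩ B)).toReal - (μ (A n)).toReal * (μ B).toReal|)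
        atTop (nhds 0))
    (r : ℕ → ℕ) (hrpos : ∀ n, 0 < r n) (hrtop : Tendsto r atTop atTop)
    (s : ℕ → ℕ → ℤ)
    (hinj : ∀ n i j, i < r n → j < r n → s n i = s n j → i = j)
    (M m : ℕ → ℤ)
    (hub : ∀ n i, i < r n → m n ≤ s n i ∧ s n i ≤ M n)
    (hMmem : ∀ n, ∃ i, i < r n ∧ s n i = M n)
    (hmmem : ∀ n, ∃ i, i < r n ∧ s n i = m n)
    (hdens : 0 < Filter.liminf (fun n : ℕ => (r n : ℝ) / ((M n - m n : ℤ) : ℝ)) atTop) :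
    ∀ A : ℕ → Set X, (∀ n, MeasurableSet (A n)) → ∀ B : Set X, MeasurableSet B →
      Tendsto (fun n : ℕ =>
          (1 / (r n : ℝ)) * ∑ i ∈ Finset.range (r n),
            |(μ (iterZ T (s n i) '' A n ∩ B)).toReal - (μ (A n)).toReal * (μ B).toReal|)
        atTop (nhds 0) := by
  intro A hA B hB
  set L : ℕ → ℕ := fun n => (M n - m n).toNat + 1 with hLdef
  set A' : ℕ → Set X := fun n => iterZ T (m n) '' A n with hA'def
  have hA' : ∀ n, MeasurableSet (A' n) := fun n => measurableSet_iterZ_image T (m n) (hA n)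
  set F : ℕ → ℕ → ℝ := fun n k =>
    |(μ (iterZ T (k : ℤ) '' A' n ∩ B)).toReal - (μ (A' n)).toReal * (μ B).toReal| with hFdef
  -- injectivity of the shifted indices
  have hinjOn : ∀ n, Set.InjOn (fun i => (s n i - m n).toNat) (Finset.range (r n)) := by
    intro n i hi j hj hij
    simp only [Finset.coe_range, Set.mem_Iio] at hi hj
    have h1 := hub n i hi
    have h2 := hub n j hj
    simp only at hij
    exact hinj n i j hi hj (by omega)
  have hsub : ∀ n, (Finset.range (r n)).image (fun i => (s n i - m n).toNat)
      ⊆ Finset.range (L n) := by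
    intro n k hk
    rw [Finset.mem_image] at hk
    obtain ⟨i, hi, rfl⟩ := hk
    rw [Finset.mem_range] at hi ⊢
    have := hub n i hi
    simp only [hLdef]
    omega
  have hrL : ∀ n, r n ≤ L n := by
    intro n
    have hcard := Finset.card_le_card (hsub n)
    rwa [Finset.card_image_of_injOn (hinjOn n), Finset.card_range, Finset.card_range] at hcard
  have hLtop : Tendsto L atTop atTop := tendsto_atTop_mono hrL hrtop
  have hgtend := avg_tendsto_zero μ T hwm A' hA' B hB L hLtop
  -- per-term equality
  have hterm : ∀ n i, i < r n →
      |(μ (iterZ T (s n i) '' A n ∩ B)).toReal - (μ (A n)).toReal * (μ B).toReal|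
        = F n ((s n i - m n).toNat) := by
    intro n i hi
    have h1 := hub n i hi
    have hk : (((s n i - m n).toNat : ℕ) : ℤ) + m n = s n i := by omega
    have himg : iterZ T (((s n i - m n).toNat : ℕ) : ℤ) '' A' n = iterZ T (s n i) '' A n := by
      simp only [hA'def]
      rw [← iterZ_image_add, hk]
    simp only [hFdef, himg, hA'def, measure_iterZ_image T hT (m n) (hA n)]
    rw [← iterZ_image_add, hk]
  -- sum comparison
  have hsum : ∀ n, (∑ i ∈ Finset.range (r n),
      |(μ (iterZ T (s n i) '' A n ∩ B)).toReal - (μ (A n)).toReal * (μ B).toReal|)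
        ≤ ∑ k ∈ Finset.range (L n), F n k := by
    intro n
    rw [Finset.sum_congr rfl fun i hi => hterm n i (Finset.mem_range.mp hi)]
    have hinj' : ∀ x ∈ Finset.range (r n), ∀ y ∈ Finset.range (r n),
        (s n x - m n).toNat = (s n y - m n).toNat → x = y := fun x hx y hy h =>
      hinjOn n (by simpa using hx) (by simpa using hy) h
    rw [← Finset.sum_image hinj']
    refine Finset.sum_le_sum_of_subset_of_nonneg (hsub n) fun k _ _ => ?_
    simp only [hFdef]
    exact abs_nonneg _
  -- density bound
  have hrat0 : ∀ n : ℕ, (0:ℝ) ≤ (r n : ℝ) / ((M n - m n : ℤ) : ℝ) := by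
    intro n
    have hmM : (0:ℤ) ≤ M n - m n := by
      obtain ⟨i, hi, he⟩ := hMmem n
      have := hub n i hi
      omega
    apply div_nonneg (by positivity)
    exact_mod_cast hmM
  set c : ℝ := Filter.liminf (fun n : ℕ => (r n : ℝ) / ((M n - m n : ℤ) : ℝ)) atTop / 2 with hcdef
  have hc : 0 < c := by positivity
  have hclt : c < Filter.liminf (fun n : ℕ => (r n : ℝ) / ((M n - m n : ℤ) : ℝ)) atTop := by
    rw [hcdef]; linarith
  have hev : ∀ᶠ n in atTop, c < (r n : ℝ) / ((M n - m n : ℤ) : ℝ) :=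
    eventually_lt_of_lt_liminf hclt
      ⟨0, Filter.eventually_map.mpr (Filter.Eventually.of_forall hrat0)⟩
  -- combine
  have hbound : ∀ᶠ n in atTop,
      (1 / (r n : ℝ)) * ∑ i ∈ Finset.range (r n),
        |(μ (iterZ T (s n i) '' A n ∩ B)).toReal - (μ (A n)).toReal * (μ B).toReal|
      ≤ (2 / c) * ((1 / (L n : ℝ)) * ∑ k ∈ Finset.range (L n), F n k) := by
    filter_upwards [hev] with n hn
    have hmM : (0:ℤ) ≤ M n - m n := by
      obtain ⟨i, hi, he⟩ := hMmem n
      have := hub n i hi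
      omega
    have hdZpos : (0:ℤ) < M n - m n := by
      rcases hmM.lt_or_eq with h | h
      · exact h
      · exfalso
        rw [← h] at hn
        simp only [Int.cast_zero, div_zero] at hn
        linarith
    have hdRpos : (0:ℝ) < ((M n - m n : ℤ) : ℝ) := by exact_mod_cast hdZpos
    have hdR1 : (1:ℝ) ≤ ((M n - m n : ℤ) : ℝ) := by exact_mod_cast hdZpos
    have hcd : c * ((M n - m n : ℤ) : ℝ) < (r n : ℝ) := (lt_div_iff₀ hdRpos).mp hn
    have hLcast : (L n : ℝ) = ((M n - m n : ℤ) : ℝ) + 1 := by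
      have h1 : ((L n : ℕ) : ℤ) = (M n - m n) + 1 := by
        simp only [hLdef]
        omega
      exact_mod_cast h1
    have hrpos' : (0:ℝ) < (r n : ℝ) := by exact_mod_cast hrpos n
    have hLpos : (0:ℝ) < (L n : ℝ) := by rw [hLcast]; linarith
    have hS2 : 0 ≤ ∑ k ∈ Finset.range (L n), F n k := by
      apply Finset.sum_nonneg
      intro k _
      simp only [hFdef]
      exact abs_nonneg _
    calc (1 / (r n : ℝ)) * ∑ i ∈ Finset.range (r n),
          |(μ (iterZ T (s n i) '' A n ∩ B)).toReal - (μ (A n)).toReal * (μ B).toReal|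
        ≤ (1 / (r n : ℝ)) * ∑ k ∈ Finset.range (L n), F n k :=
          mul_le_mul_of_nonneg_left (hsum n) (by positivity)
      _ ≤ (2 / c) * ((1 / (L n : ℝ)) * ∑ k ∈ Finset.range (L n), F n k) := by
          rw [← mul_assoc]
          apply mul_le_mul_of_nonneg_right _ hS2
          rw [div_mul_div_comm, mul_one, div_le_div_iff₀ hrpos' (by positivity)]
          nlinarith
  have htend : Tendsto (fun n => (2 / c) * ((1 / (L n : ℝ)) * ∑ k ∈ Finset.range (L n), F n k))
      atTop (nhds 0) := by
    have := hgtend.const_mul (2 / c)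
    simpa using this
  refine squeeze_zero' (Filter.Eventually.of_forall fun n => ?_) hbound htend
  exact mul_nonneg (by positivity) (Finset.sum_nonneg fun i _ => abs_nonneg _)
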